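/- Let p > 1, q > 1 with 1/p + 1/q = 1, and set A = (2 − 1/p)/3 and B = (1 + 1/p)/3, so A + B = 1. Then for all real a > 0 and b > 0, a/p + b/q − a^{1/p} b^{1/q} ≥ (1/(2pq)) · (a − b)^2 / (A·a + B·b). -/

import Mathlib

open Real Set

lemma young_aux (α A B : ℝ) (hα0 : 0 < α) (hα1 : α < 1)
    (hA : A = (2 - α)/3) (hB : B = (1 + α)/3)
    (b : ℝ) (hb : 0 < b) (a : ℝ) (ha : 0 < a) :
    α*(1-α)/2 * ((a-b)^2 / (A*a + B*b)) ≤ a*α + b*(1-α) - a^α * b^(1-α) := by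
  subst hA; subst hB
  set A : ℝ := (2-α)/3 with hA
  set B : ℝ := (1+α)/3 with hB
  have hA0 : 0 < A := by rw [hA]; linarith
  have hB0 : 0 < B := by rw [hB]; linarith
  have hAB : A + B = 1 := by rw [hA, hB]; ring
  set c : ℝ := α*(1-α)/2 with hc
  have hc0 : 0 < c := by rw [hc]; nlinarith
  have hD : ∀ x : ℝ, 0 < x → 0 < A*x + B*b := fun x hx => by positivity
  set F : ℝ → ℝ := fun x => x*α + b*(1-α) - x^α * b^(1-α) - c * ((x-b)^2/(A*x+B*b)) with hF
  set F' : ℝ → ℝ := fun x =>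
    α - α * x^(α-1) * b^(1-α)
      - c * ((2*(x-b)*(A*x+B*b) - (x-b)^2*A)/(A*x+B*b)^2) with hF'def
  -- derivative of F
  have hFderiv : ∀ x : ℝ, 0 < x → HasDerivAt F (F' x) x := by
    intro x hx
    have hDx : (A*x+B*b) ≠ 0 := (hD x hx).ne'
    have h1 : HasDerivAt (fun x : ℝ => x*α) α x := by
      simpa using (hasDerivAt_id x).mul_const α
    have h2 : HasDerivAt (fun x : ℝ => x^α * b^(1-α)) (α * x^(α-1) * b^(1-α)) x := by
      exact (Real.hasDerivAt_rpow_const (Or.inl hx.ne')).mul_const _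
    have hN : HasDerivAt (fun x : ℝ => (x-b)^2) (2*(x-b)) x := by
      have := ((hasDerivAt_id x).sub_const b).fun_pow 2
      simpa using this
    have hDen : HasDerivAt (fun x : ℝ => A*x+B*b) A x := by
      simpa using ((hasDerivAt_id x).const_mul A).add_const (B*b)
    have hQ : HasDerivAt (fun x : ℝ => (x-b)^2/(A*x+B*b))
        ((2*(x-b)*(A*x+B*b) - (x-b)^2*A)/(A*x+B*b)^2) x := hN.div hDen hDx
    have := (h1.const_add (b*(1-α))).fun_sub h2 |>.fun_sub (hQ.const_mul c)
    -- fix up the function and the value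
    convert this using 2
    · rfl
    · rfl
    · simp only [hF]; ring
  -- second derivative: raw expression
  have hF'deriv : ∀ x : ℝ, 0 < x →
      HasDerivAt F' (α*(1-α)*x^(α-2)*b^(1-α) - c*(2*b^2)/(A*x+B*b)^3) x := by
    intro x hx
    have hDx : (A*x+B*b) ≠ 0 := (hD x hx).ne'
    have h2 : HasDerivAt (fun x : ℝ => α * x^(α-1) * b^(1-α))
        (α * ((α-1) * x^(α-1-1)) * b^(1-α)) x := by
      exact (((Real.hasDerivAt_rpow_const (Or.inl hx.ne')).const_mul α).mul_const _)
    have hDen : HasDerivAt (fun x : ℝ => A*x+B*b) A x := by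
      simpa using ((hasDerivAt_id x).const_mul A).add_const (B*b)
    have hxb : HasDerivAt (fun x : ℝ => x - b) 1 x := (hasDerivAt_id x).sub_const b
    have hG : HasDerivAt (fun x : ℝ => 2*(x-b)*(A*x+B*b) - (x-b)^2*A)
        ((2*1)*(A*x+B*b) + 2*(x-b)*A - (2*(x-b)*1)*A) x := by
      have g1 : HasDerivAt (fun x : ℝ => 2*(x-b)) (2*1) x := hxb.const_mul 2
      have g2 := (g1.mul hDen)
      have g3 : HasDerivAt (fun x : ℝ => (x-b)^2) (2*(x-b)*1) x := by
        simpa using hxb.fun_pow 2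
      exact g2.sub (g3.mul_const A)
    have hDen2 : HasDerivAt (fun x : ℝ => (A*x+B*b)^2) (2*(A*x+B*b)*A) x := by
      simpa using hDen.fun_pow 2
    have hDen2ne : ((A*x+B*b)^2) ≠ 0 := pow_ne_zero 2 hDx
    have hQ := (hG.div hDen2 hDen2ne)
    have htot := ((hasDerivAt_const x α).fun_sub h2).fun_sub (hQ.const_mul c)
    have hqe : ((2*1*(A*x+B*b) + 2*(x-b)*A - 2*(x-b)*1*A) * (A*x+B*b)^2 -
        (2*(x-b)*(A*x+B*b) - (x-b)^2*A) * (2*(A*x+B*b)*A)) / ((A*x+B*b)^2)^2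
        = 2*b^2/(A*x+B*b)^3 := by
      rw [div_eq_div_iff (pow_ne_zero 2 (pow_ne_zero 2 hDx)) (pow_ne_zero 3 hDx), hA, hB]
      ring
    rw [hqe] at htot
    have e1 : x^(α-1-1) = x^(α-2) := by rw [show α-1-1 = α-2 from by ring]
    rw [e1] at htot
    convert htot using 1
    · rfl
    · rfl
    · rfl
    · ring
  -- F'' ≥ 0 on (0,∞)
  have hF''nonneg : ∀ x : ℝ, 0 < x →
      0 ≤ α*(1-α)*x^(α-2)*b^(1-α) - c*(2*b^2)/(A*x+B*b)^3 := by
    intro x hx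
    have hDx := hD x hx
    have key : b^2 ≤ x^(α-2)*b^(1-α)*(A*x+B*b)^3 := by
      have h1 : x^A * b^B ≤ A*x+B*b :=
        Real.geom_mean_le_arith_mean2_weighted hA0.le hB0.le hx.le hb.le hAB
      have h2 : (x^A * b^B)^3 ≤ (A*x+B*b)^3 := by
        exact pow_le_pow_left₀ (by positivity) h1 3
      have ex : (α-2) + A*3 = 0 := by rw [hA]; ring
      have eb : (1-α) + B*3 = 2 := by rw [hB]; ring
      calc b^2 = x^((α-2) + A*3) * b^((1-α) + B*3) := by
            rw [ex, eb, Real.rpow_zero, one_mul]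
            rw [show (2:ℝ) = ((2:ℕ):ℝ) by norm_num, Real.rpow_natCast]
        _ = x^(α-2)*b^(1-α) * (x^A * b^B)^3 := by
            rw [Real.rpow_add hx, Real.rpow_add hb, mul_pow,
              ← Real.rpow_natCast (x^A) 3, ← Real.rpow_natCast (b^B) 3,
              ← Real.rpow_mul hx.le, ← Real.rpow_mul hb.le]
            push_cast
            ring
        _ ≤ x^(α-2)*b^(1-α) * (A*x+B*b)^3 := by
            exact mul_le_mul_of_nonneg_left h2 (by positivity)
    rw [sub_nonneg, div_le_iff₀ (pow_pos (hD x hx) 3)]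
    calc c*(2*b^2) = α*(1-α) * b^2 := by rw [hc]; ring
      _ ≤ α*(1-α) * (x^(α-2)*b^(1-α)*(A*x+B*b)^3) := by
          exact mul_le_mul_of_nonneg_left key (by nlinarith)
      _ = α*(1-α)*x^(α-2)*b^(1-α)*(A*x+B*b)^3 := by ring
  -- F' b = 0
  have hF'b : F' b = 0 := by
    rw [hF'def]
    simp only [sub_self]
    rw [mul_assoc, ← Real.rpow_add hb, show α-1+(1-α) = 0 from by ring, Real.rpow_zero]
    norm_num
  -- F b = 0
  have hFb : F b = 0 := by
    rw [hF]
    simp only [sub_self]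
    rw [← Real.rpow_add hb, show α+(1-α) = 1 from by ring, Real.rpow_one]
    norm_num
    ring
  -- F' is monotone on Ioi 0
  have hmono : MonotoneOn F' (Ioi (0:ℝ)) := by
    apply monotoneOn_of_hasDerivWithinAt_nonneg (convex_Ioi 0)
      (fun x hx => ((hF'deriv x hx).continuousAt).continuousWithinAt)
      (f' := fun x => α*(1-α)*x^(α-2)*b^(1-α) - c*(2*b^2)/(A*x+B*b)^3)
    · intro x hx
      rw [interior_Ioi] at hx
      exact (hF'deriv x hx).hasDerivWithinAt
    · intro x hx
      rw [interior_Ioi] at hx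
      exact hF''nonneg x hx
  -- conclude F a ≥ 0
  have hFa : 0 ≤ F a := by
    rcases le_total b a with hba | hab
    · have hmonF : MonotoneOn F (Ici b) := by
        apply monotoneOn_of_hasDerivWithinAt_nonneg (convex_Ici b)
          (f' := F')
        · intro x hx
          exact ((hFderiv x (lt_of_lt_of_le hb hx)).continuousAt).continuousWithinAt
        · intro x hx
          rw [interior_Ici] at hx
          exact (hFderiv x (hb.trans hx)).hasDerivWithinAt
        · intro x hx
          rw [interior_Ici] at hx
          have := hmono (mem_Ioi.mpr hb) (mem_Ioi.mpr (hb.trans hx)) hx.le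
          linarith [hF'b]
      have := hmonF (mem_Ici.mpr le_rfl) (mem_Ici.mpr hba) hba
      linarith [hFb]
    · have hantF : AntitoneOn F (Icc a b) := by
        apply antitoneOn_of_hasDerivWithinAt_nonpos (convex_Icc a b)
          (f' := F')
        · intro x hx
          exact ((hFderiv x (lt_of_lt_of_le ha hx.1)).continuousAt).continuousWithinAt
        · intro x hx
          rw [interior_Icc] at hx
          exact (hFderiv x (ha.trans hx.1)).hasDerivWithinAt
        · intro x hx
          rw [interior_Icc] at hx
          have := hmono (mem_Ioi.mpr (ha.trans hx.1)) (mem_Ioi.mpr hb) hx.2.le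
          linarith [hF'b]
      have := hantF (mem_Icc.mpr ⟨le_rfl, hab⟩) (mem_Icc.mpr ⟨hab, le_rfl⟩) hab
      linarith [hFb]
  rw [hF] at hFa
  simp only at hFa
  linarith

theorem strengthened_young
    (p q : ℝ) (hp : 1 < p) (hq : 1 < q) (hpq : 1/p + 1/q = 1)
    (A B : ℝ) (hA : A = (2 - 1/p)/3) (hB : B = (1 + 1/p)/3)
    (a b : ℝ) (ha : 0 < a) (hb : 0 < b) :
    a/p + b/q - a ^ (1/p) * b ^ (1/q)
      ≥ (1/(2*p*q)) * ((a - b)^2 / (A*a + B*b)) := by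
  have hp0 : (0:ℝ) < p := by linarith
  have hq0 : (0:ℝ) < q := by linarith
  have hα0 : 0 < 1/p := by positivity
  have hα1 : 1/p < 1 := by rw [div_lt_one hp0]; exact hp
  have h1q : 1/q = 1 - 1/p := by linarith
  have key := young_aux (1/p) A B hα0 hα1 hA hB b hb a ha
  rw [← h1q] at key
  have e1 : (1/p)*(1/q)/2 = 1/(2*p*q) := by
    field_simp
  rw [e1] at key
  rw [ge_iff_le]
  calc (1/(2*p*q)) * ((a-b)^2/(A*a+B*b)) ≤ a*(1/p) + b*(1/q) - a^(1/p)*b^(1/q) := key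
    _ = a/p + b/q - a^(1/p)*b^(1/q) := by ring
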